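/- Let n ≥ 2 and k ≥ 1. The number of proper colorings of the unbalanced cycle C_n^− with color set {−k,…,−1,1,…,k} equals (2k−1)^n − (−1)^n. -/

import Mathlib

open Finset

namespace Statement4Aux

noncomputable def C (k : ℕ) : Finset ℤ := (Finset.Icc (-(k:ℤ)) (k:ℤ)).erase 0

lemma mem_C {k : ℕ} {x : ℤ} : x ∈ C k ↔ x ≠ 0 ∧ |x| ≤ (k:ℤ) := by
  simp [C, abs_le]

lemma neg_mem_C {k : ℕ} {x : ℤ} (h : x ∈ C k) : -x ∈ C k := by
  rw [mem_C] at h ⊢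
  simpa using h

lemma card_C (k : ℕ) : (C k).card = 2 * k := by
  have h0 : (0:ℤ) ∈ Finset.Icc (-(k:ℤ)) (k:ℤ) := by simp
  rw [C, Finset.card_erase_of_mem h0, Int.card_Icc]
  have : ((k:ℤ) + 1 - -(k:ℤ)).toNat = 2*k+1 := by omega
  omega

noncomputable def Pset (k m : ℕ) : Finset (Fin (m+1) → ℤ) :=
  (Fintype.piFinset (fun _ => C k)).filter
    (fun c => ∀ j : Fin m, c j.castSucc ≠ c j.succ)

noncomputable def Eset (k m : ℕ) : Finset (Fin (m+1) → ℤ) :=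
  (Pset k m).filter (fun c => c (Fin.last m) = - c 0)

lemma mem_Pset {k m : ℕ} {c : Fin (m+1) → ℤ} :
    c ∈ Pset k m ↔ (∀ i, c i ∈ C k) ∧ ∀ j : Fin m, c j.castSucc ≠ c j.succ := by
  simp [Pset, Fintype.mem_piFinset]

lemma mem_Pset_succ {k m : ℕ} {c : Fin (m+2) → ℤ} :
    c ∈ Pset k (m+1) ↔ Fin.init c ∈ Pset k m ∧ c (Fin.last (m+1)) ∈ C k ∧
      c ((Fin.last m).castSucc) ≠ c (Fin.last (m+1)) := by
  rw [mem_Pset, mem_Pset]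
  constructor
  · rintro ⟨h1, h2⟩
    refine ⟨⟨fun i => h1 _, fun j => ?_⟩, h1 _, ?_⟩
    · have := h2 j.castSucc
      exact this
    · have := h2 (Fin.last m)
      simpa [Fin.succ_last] using this
  · rintro ⟨⟨h1, h2⟩, h3, h4⟩
    constructor
    · intro i
      rcases eq_or_ne i (Fin.last (m+1)) with rfl | hi
      · exact h3
      · obtain ⟨j, rfl⟩ := Fin.exists_castSucc_eq.mpr hi
        exact h1 j
    · intro j
      rcases eq_or_ne j (Fin.last m) with rfl | hj
      · simpa [Fin.succ_last] using h4
      · obtain ⟨i, rfl⟩ := Fin.exists_castSucc_eq.mpr hj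
        have := h2 i
        exact this

lemma card_Pset_zero (k : ℕ) : (Pset k 0).card = 2 * k := by
  have h : Pset k 0 = Fintype.piFinset (fun _ : Fin 1 => C k) := by
    rw [Pset, Finset.filter_true_of_mem]
    intro c _ j
    exact j.elim0
  rw [h, Fintype.card_piFinset]
  simp [card_C]

lemma card_Pset_succ (k m : ℕ) :
    (Pset k (m+1)).card = (2 * k - 1) * (Pset k m).card := by
  classical
  have hbij : ((Pset k m).sigma fun c => (C k).erase (c (Fin.last m))).card
      = (Pset k (m+1)).card := by
    apply Finset.card_bij (fun p _ => Fin.snoc p.1 p.2)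
    · rintro ⟨c, x⟩ hp
      rw [Finset.mem_sigma] at hp
      obtain ⟨hc, hx⟩ := hp
      rw [Finset.mem_erase] at hx
      rw [mem_Pset_succ]
      refine ⟨by simpa [Fin.init_snoc] using hc, by simpa using hx.2, ?_⟩
      simpa [Fin.snoc_castSucc, Fin.snoc_last] using fun h => hx.1 h.symm
    · rintro ⟨c, x⟩ _ ⟨c', x'⟩ _ h
      have hc : c = c' := by
        have := congrArg Fin.init h
        simpa [Fin.init_snoc] using this
      have hx : x = x' := by
        have := congrArg (fun f => f (Fin.last (m+1))) h
        simpa [Fin.snoc_last] using this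
      simp [hc, hx]
    · intro c hc
      rw [mem_Pset_succ] at hc
      obtain ⟨h1, h2, h3⟩ := hc
      refine ⟨⟨Fin.init c, c (Fin.last (m+1))⟩, ?_, ?_⟩
      · rw [Finset.mem_sigma]
        refine ⟨h1, Finset.mem_erase.mpr ⟨?_, h2⟩⟩
        simpa [Fin.init] using fun h => h3 h.symm
      · simp [Fin.snoc_init_self]
  rw [← hbij, Finset.card_sigma]
  rw [Finset.sum_congr rfl (fun c hc => ?_), Finset.sum_const, smul_eq_mul, mul_comm]
  have hmem : c (Fin.last m) ∈ C k := (mem_Pset.mp hc).1 _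
  rw [Finset.card_erase_of_mem hmem, card_C]

lemma Eset_subset (k m : ℕ) : Eset k m ⊆ Pset k m := Finset.filter_subset _ _

lemma Eset_zero (k : ℕ) : Eset k 0 = ∅ := by
  classical
  rw [Eset, Finset.filter_eq_empty_iff]
  intro c hc
  have h := (mem_Pset.mp hc).1 0
  rw [mem_C] at h
  have h0 : (Fin.last 0 : Fin 1) = 0 := rfl
  rw [h0]
  intro he
  exact h.1 (by linarith)

lemma card_Eset_succ (k m : ℕ) :
    (Eset k (m+1)).card = ((Pset k m) \ (Eset k m)).card := by
  classical
  symm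
  apply Finset.card_bij (fun (c : Fin (m+1) → ℤ) _ => (Fin.snoc c (-(c 0)) : Fin (m+2) → ℤ))
  · intro c hc
    rw [Finset.mem_sdiff] at hc
    obtain ⟨hp, he⟩ := hc
    have h0 : c 0 ∈ C k := (mem_Pset.mp hp).1 0
    have hne : c (Fin.last m) ≠ - c 0 := by
      intro h
      exact he (Finset.mem_filter.mpr ⟨hp, h⟩)
    rw [Eset, Finset.mem_filter]
    constructor
    · rw [mem_Pset_succ]
      refine ⟨by simpa [Fin.init_snoc] using hp, by simpa [Fin.snoc_last] using neg_mem_C h0, ?_⟩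
      simpa [Fin.snoc_castSucc, Fin.snoc_last] using hne
    · have hz : ((0 : Fin (m+1)).castSucc) = (0 : Fin (m+2)) := by
        ext; simp
      simp only [Fin.snoc_last]
      rw [← hz, Fin.snoc_castSucc]
  · intro c _ c' _ h
    have := congrArg Fin.init h
    simpa [Fin.init_snoc] using this
  · intro d hd
    rw [Eset, Finset.mem_filter] at hd
    obtain ⟨hp, he⟩ := hd
    rw [mem_Pset_succ] at hp
    obtain ⟨h1, h2, h3⟩ := hp
    have hz : ((0 : Fin (m+1)).castSucc) = (0 : Fin (m+2)) := by ext; simp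
    have hd0 : Fin.init d 0 = d 0 := by rw [Fin.init, hz]
    refine ⟨Fin.init d, ?_, ?_⟩
    · rw [Finset.mem_sdiff]
      refine ⟨h1, ?_⟩
      rw [Eset, Finset.mem_filter]
      rintro ⟨-, habs⟩
      apply h3
      rw [he]
      rw [Fin.init, hd0] at habs
      exact habs
    · rw [hd0, ← he, Fin.snoc_init_self]

lemma card_Pset (k m : ℕ) (hk : 1 ≤ k) :
    ((Pset k m).card : ℤ) = 2 * k * (2 * k - 1) ^ m := by
  induction m with
  | zero => simp [card_Pset_zero]
  | succ m ih =>
      rw [card_Pset_succ, Nat.cast_mul, Nat.cast_sub (by omega : 1 ≤ 2 * k), ih]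
      push_cast
      ring

lemma card_Eset (k m : ℕ) (hk : 1 ≤ k) :
    ((Eset k m).card : ℤ) = (2 * k - 1) ^ m - (-1) ^ m := by
  induction m with
  | zero => simp [Eset_zero]
  | succ m ih =>
      rw [card_Eset_succ, Finset.card_sdiff_of_subset (Eset_subset k m)]
      rw [Nat.cast_sub (Finset.card_le_card (Eset_subset k m))]
      rw [ih, card_Pset k m hk]
      ring

end Statement4Aux

open Statement4Aux in
/-- The number of zero-free proper colorings of the unbalanced cycle `C_n^-` with color
set `{-k, …, -1, 1, …, k}` is `(2k-1)^n - (-1)^n`.  The vertices are `ZMod n`;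
all edges `{i, i+1}` are positive except the edge `{-1, 0}`, which is negative. -/
theorem statement4 (n k : ℕ) (hn : 2 ≤ n) (hk : 1 ≤ k) :
    (Nat.card {c : ZMod n → ℤ //
        (∀ x, c x ≠ 0 ∧ |c x| ≤ (k : ℤ)) ∧
        (∀ i : ZMod n, i ≠ -1 → c i ≠ c (i + 1)) ∧
        c (-1) ≠ - c 0} : ℤ) = (2 * (k : ℤ) - 1) ^ n - (-1) ^ n := by
  classical
  obtain ⟨m, rfl⟩ : ∃ m, n = m + 1 := ⟨n - 1, by omega⟩
  have hneg : (-1 : ZMod (m+1)) = Fin.last m := by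
    have h1 : (Fin.last m : Fin (m+1)) + 1 = 0 := by ext; simp [Fin.add_def, Fin.last]
    have h2 : (Fin.last m : ZMod (m+1)) + 1 = 0 := h1
    exact (neg_eq_of_add_eq_zero_left h2)
  have hcs : ∀ j : Fin m, ((j.castSucc : ZMod (m+1))) + 1 = j.succ := by
    intro j
    have h1 : (j.castSucc : Fin (m+1)) + 1 = j.succ := Fin.coeSucc_eq_succ
    exact h1
  have hiff : ∀ c : ZMod (m+1) → ℤ,
      ((∀ x, c x ≠ 0 ∧ |c x| ≤ (k : ℤ)) ∧
        (∀ i : ZMod (m+1), i ≠ -1 → c i ≠ c (i + 1)) ∧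
        c (-1) ≠ - c 0) ↔ (c ∈ (Pset k m \ Eset k m)) := by
    intro c
    erw [Finset.mem_sdiff, mem_Pset, Eset, Finset.mem_filter]
    constructor
    · rintro ⟨h1, h2, h3⟩
      have hP : (∀ i, c i ∈ C k) ∧ ∀ j : Fin m, c j.castSucc ≠ c j.succ := by
        refine ⟨fun i => mem_C.mpr (h1 i), fun j => ?_⟩
        have hne : (j.castSucc : ZMod (m+1)) ≠ -1 := by
          exact fun h => (Fin.castSucc_lt_last j).ne (h.trans hneg)
        have := h2 j.castSucc hne
        exact fun h => this (h.trans (congrArg c (hcs j)).symm)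
      refine ⟨hP, ?_⟩
      rintro ⟨-, habs⟩
      apply h3
      rw [hneg]
      exact habs
    · rintro ⟨⟨h1, h2⟩, h3⟩
      refine ⟨fun x => mem_C.mp (h1 x), ?_, ?_⟩
      · intro i hi
        rw [hneg] at hi
        obtain ⟨j, rfl⟩ := Fin.exists_castSucc_eq.mpr hi
        exact fun h => h2 j (h.trans (congrArg c (hcs j)))
      · rw [hneg]
        intro habs
        exact h3 ⟨mem_Pset.mpr ⟨h1, h2⟩, habs⟩
  have hcard : Nat.card {c : ZMod (m+1) → ℤ //
        (∀ x, c x ≠ 0 ∧ |c x| ≤ (k : ℤ)) ∧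
        (∀ i : ZMod (m+1), i ≠ -1 → c i ≠ c (i + 1)) ∧
        c (-1) ≠ - c 0} = (Pset k m \ Eset k m).card := by
    rw [Nat.card_congr (Equiv.subtypeEquivRight hiff)]; exact Nat.card_eq_finsetCard _
  rw [hcard]
  rw [Finset.card_sdiff_of_subset (Eset_subset k m),
    Nat.cast_sub (Finset.card_le_card (Eset_subset k m)), card_Pset k m hk, card_Eset k m hk]
  ring
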